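/- Weak modal refinement is preserved by adding output queues: for MIOs S and S' with the same signature and any subset o of their output actions, if S' ≤_m* S then Ω_o(S') ≤_m* Ω_o(S). -/

import Mathlib

/-- A modal I/O-transition system (MIO): states, an initial state, a signature of
input, output and internal actions (pairwise disjoint subsets of the action
universe `A`), may-transitions and must-transitions with must ⊆ may. -/
structure MIO (A : Type) where
  State : Type
  start : State
  inp : Set A
  out : Set A
  intl : Set A
  may : State → A → State → Prop
  must : State → A → State → Prop
  inp_out : ∀ a, a ∈ inp → a ∈ out → False
  inp_intl : ∀ a, a ∈ inp → a ∈ intl → False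
  out_intl : ∀ a, a ∈ out → a ∈ intl → False
  must_sub : ∀ s a s', must s a s' → may s a s'

namespace MIO

variable {A B : Type}

/-- The set of all actions of a MIO. -/
def act (S : MIO A) : Set A := S.inp ∪ S.out ∪ S.intl

/-- Two MIOs have the same signature. -/
def SigEq (S T : MIO A) : Prop := S.inp = T.inp ∧ S.out = T.out ∧ S.intl = T.intl

/-- Strong modal refinement `S ≤_m T`. -/
def StrongRefines (S T : MIO A) : Prop :=
  SigEq S T ∧
  ∃ R : S.State → T.State → Prop, R S.start T.start ∧
    ∀ s t, R s t →
      (∀ a t', T.must t a t' → ∃ s', S.must s a s' ∧ R s' t') ∧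
      (∀ a s', S.may s a s' → ∃ t', T.may t a t' ∧ R s' t')

/-- One internal must-transition. -/
def tauMust (S : MIO A) (s s' : S.State) : Prop := ∃ a ∈ S.intl, S.must s a s'

/-- Finitely many (possibly zero) internal must-transitions. -/
def tauMustStar (S : MIO A) : S.State → S.State → Prop := Relation.ReflTransGen S.tauMust

/-- One internal may-transition. -/
def tauMay (S : MIO A) (s s' : S.State) : Prop := ∃ a ∈ S.intl, S.may s a s'

/-- Finitely many (possibly zero) internal may-transitions. -/
def tauMayStar (S : MIO A) : S.State → S.State → Prop := Relation.ReflTransGen S.tauMay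

/-- Weak modal refinement `S ≤_m* T`. -/
def WeakRefines (S T : MIO A) : Prop :=
  SigEq S T ∧
  ∃ R : S.State → T.State → Prop, R S.start T.start ∧
    ∀ s t, R s t →
      (∀ a ∈ T.inp ∪ T.out, ∀ t', T.must t a t' →
        ∃ s1 s2 s', S.tauMustStar s s1 ∧ S.must s1 a s2 ∧ S.tauMustStar s2 s' ∧ R s' t') ∧
      (∀ a ∈ T.intl, ∀ t', T.must t a t' → ∃ s', S.tauMustStar s s' ∧ R s' t') ∧
      (∀ a ∈ S.inp ∪ S.out, ∀ s', S.may s a s' →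
        ∃ t1 t2 t', T.tauMayStar t t1 ∧ T.may t1 a t2 ∧ T.tauMayStar t2 t' ∧ R s' t') ∧
      (∀ a ∈ S.intl, ∀ s', S.may s a s' → ∃ t', T.tauMayStar t t' ∧ R s' t')

/-- Shared actions of two MIOs. -/
def shared (S T : MIO A) : Set A := S.act ∩ T.act

/-- Two MIOs are (syntactically) composable if their actions overlap only on
complementary types. -/
def Composable (S T : MIO A) : Prop :=
  shared S T ⊆ (S.inp ∩ T.out) ∪ (T.inp ∩ S.out)

/-- Synchronous composition `S ⊗_sy T` of composable MIOs. -/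
def syncComp (S T : MIO A) (_h : Composable S T) : MIO A where
  State := S.State × T.State
  start := (S.start, T.start)
  inp := (S.inp ∪ T.inp) \ shared S T
  out := (S.out ∪ T.out) \ shared S T
  intl := S.intl ∪ T.intl ∪ shared S T
  may p a p' :=
    (a ∈ shared S T ∧ S.may p.1 a p'.1 ∧ T.may p.2 a p'.2) ∨
    (a ∈ S.act ∧ a ∉ shared S T ∧ S.may p.1 a p'.1 ∧ p'.2 = p.2) ∨
    (a ∈ T.act ∧ a ∉ shared S T ∧ T.may p.2 a p'.2 ∧ p'.1 = p.1)
  must p a p' :=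
    (a ∈ shared S T ∧ S.must p.1 a p'.1 ∧ T.must p.2 a p'.2) ∨
    (a ∈ S.act ∧ a ∉ shared S T ∧ S.must p.1 a p'.1 ∧ p'.2 = p.2) ∨
    (a ∈ T.act ∧ a ∉ shared S T ∧ T.must p.2 a p'.2 ∧ p'.1 = p.1)
  inp_out := by
    intro a ha hb
    have h1 := S.inp_out a; have h2 := T.inp_out a
    simp only [Set.mem_diff, Set.mem_union, shared, act, Set.mem_inter_iff] at ha hb
    tauto
  inp_intl := by
    intro a ha hb
    have h1 := S.inp_intl a; have h2 := T.inp_intl a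
    simp only [Set.mem_diff, Set.mem_union, shared, act, Set.mem_inter_iff] at ha hb
    tauto
  out_intl := by
    intro a ha hb
    have h1 := S.out_intl a; have h2 := T.out_intl a
    simp only [Set.mem_diff, Set.mem_union, shared, act, Set.mem_inter_iff] at ha hb
    tauto
  must_sub := by
    rintro p a p' (⟨h1, h2, h3⟩ | ⟨h1, h2, h3, h4⟩ | ⟨h1, h2, h3, h4⟩)
    · exact Or.inl ⟨h1, S.must_sub _ _ _ h2, T.must_sub _ _ _ h3⟩
    · exact Or.inr (Or.inl ⟨h1, h2, S.must_sub _ _ _ h3, h4⟩)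
    · exact Or.inr (Or.inr ⟨h1, h2, T.must_sub _ _ _ h3, h4⟩)

/-- Reachability (w.r.t. may-transitions) from the initial state. -/
def Reachable (M : MIO A) (s : M.State) : Prop :=
  Relation.ReflTransGen (fun x y => ∃ a, M.may x a y) M.start s

/-- Strong modal compatibility `S ⇄_sc T`. -/
def StrongCompat (S T : MIO A) : Prop :=
  ∃ h : Composable S T,
    ∀ p : S.State × T.State, (syncComp S T h).Reachable p →
      (∀ a ∈ S.out ∩ T.inp, ∀ s', S.may p.1 a s' → ∃ t', T.must p.2 a t') ∧
      (∀ a ∈ T.out ∩ S.inp, ∀ t', T.may p.2 a t' → ∃ s', S.must p.1 a s')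

/-- Weak modal compatibility `S ⇄_wc T`. -/
def WeakCompat (S T : MIO A) : Prop :=
  ∃ h : Composable S T,
    ∀ p : S.State × T.State, (syncComp S T h).Reachable p →
      (∀ a ∈ S.out ∩ T.inp, ∀ s', S.may p.1 a s' →
        ∃ t1 t', T.tauMustStar p.2 t1 ∧ T.must t1 a t') ∧
      (∀ a ∈ T.out ∩ S.inp, ∀ t', T.may p.2 a t' →
        ∃ s1 s', S.tauMustStar p.1 s1 ∧ S.must s1 a s')

/-- Finite executions: `Trace M s as s'` means `M` can go from `s` to `s'` by
a sequence of may-transitions labelled by the list of actions `as`. -/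
inductive Trace (M : MIO A) : M.State → List A → M.State → Prop
  | nil (s : M.State) : Trace M s [] s
  | cons {s s' s'' : M.State} {a : A} {as : List A} :
      M.may s a s' → Trace M s' as s'' → Trace M s (a :: as) s''

/-- Renaming the actions of a MIO along an injective function. -/
def rename (f : A → B) (hf : Function.Injective f) (S : MIO A) : MIO B where
  State := S.State
  start := S.start
  inp := f '' S.inp
  out := f '' S.out
  intl := f '' S.intl
  may s b s' := ∃ a, b = f a ∧ S.may s a s'
  must s b s' := ∃ a, b = f a ∧ S.must s a s'
  inp_out := by
    rintro b ⟨a1, h1, rfl⟩ ⟨a2, h2, heq⟩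
    obtain rfl := hf heq
    exact S.inp_out a2 h1 h2
  inp_intl := by
    rintro b ⟨a1, h1, rfl⟩ ⟨a2, h2, heq⟩
    obtain rfl := hf heq
    exact S.inp_intl a2 h1 h2
  out_intl := by
    rintro b ⟨a1, h1, rfl⟩ ⟨a2, h2, heq⟩
    obtain rfl := hf heq
    exact S.out_intl a2 h1 h2
  must_sub := by
    rintro s b s' ⟨a, rfl, h⟩
    exact ⟨a, rfl, S.must_sub _ _ _ h⟩

-- Tagging function: actions in `o` become the fresh "queue input" actions `n^▷`
-- (encoded as `Sum.inr n`), all other actions are kept (as `Sum.inl a`).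
open Classical in
noncomputable def tagged (o : Set A) : A → A ⊕ A :=
  fun a => if a ∈ o then Sum.inr a else Sum.inl a

theorem tagged_injective (o : Set A) : Function.Injective (tagged o) := by
  classical
  intro a b h
  by_cases ha : a ∈ o <;> by_cases hb : b ∈ o <;>
    simp [tagged, ha, hb] at h <;> tauto

/-- The queue MIO `Q_o`: a FIFO buffer for messages in `o`. States are finite
strings over `A` (with reachable states being strings over `o`), inputs are the
tagged actions `n^▷ = Sum.inr n`, outputs the actions `n = Sum.inl n` for `n ∈ o`.
Enqueue at the front, dequeue from the back; may- and must-transitions coincide. -/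
def queueMIO (o : Set A) : MIO (A ⊕ A) where
  State := List A
  start := []
  inp := Sum.inr '' o
  out := Sum.inl '' o
  intl := ∅
  may s b s' :=
    (∃ n ∈ o, b = Sum.inr n ∧ s' = n :: s) ∨ (∃ n ∈ o, b = Sum.inl n ∧ s = s' ++ [n])
  must s b s' :=
    (∃ n ∈ o, b = Sum.inr n ∧ s' = n :: s) ∨ (∃ n ∈ o, b = Sum.inl n ∧ s = s' ++ [n])
  inp_out := by rintro b ⟨n, hn, rfl⟩ ⟨m, hm, h⟩; simp at h
  inp_intl := by rintro b _ h; simp at h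
  out_intl := by rintro b _ h; simp at h
  must_sub := fun _ _ _ h => h

theorem omega_composable (o : Set A) (S : MIO A) (ho : o ⊆ S.out) :
    Composable (rename (tagged o) (tagged_injective o) S) (queueMIO o) := by
  classical
  rintro b ⟨hb1, hb2⟩
  have hq : (∃ n ∈ o, Sum.inr n = b) ∨ (∃ n ∈ o, Sum.inl n = b) := by
    simpa [queueMIO, act, Set.image, Set.mem_union] using hb2
  have hr : ∃ a, ((a ∈ S.inp ∨ a ∈ S.out) ∨ a ∈ S.intl) ∧ tagged o a = b := by
    simpa [rename, act, ← Set.image_union] using hb1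
  obtain ⟨a, _, ha⟩ := hr
  rcases hq with ⟨n, hn, hb⟩ | ⟨n, hn, hb⟩
  · right
    constructor
    · exact ⟨n, hn, hb⟩
    · refine ⟨n, ho hn, ?_⟩
      rw [← hb]; simp [tagged, hn]
  · exfalso
    rw [← hb] at ha
    by_cases h : a ∈ o
    · simp [tagged, h] at ha
    · simp [tagged, h] at ha
      exact h (ha ▸ hn)

/-- `Ω_o(S)`: the MIO `S` with an output queue for `o ⊆ out_S`, i.e. the
synchronous product of the renamed MIO `S_o^▷` with the queue MIO `Q_o`. -/
noncomputable def Omega (o : Set A) (S : MIO A) (ho : o ⊆ S.out) : MIO (A ⊕ A) :=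
  syncComp (rename (tagged o) (tagged_injective o) S) (queueMIO o) (omega_composable o S ho)

/-- The outputs of `S` that are inputs of `T`. -/
def oOf (S T : MIO A) : Set A := S.out ∩ T.inp

/-- `Ω_{o_S}(S)` where `o_S = out_S ∩ in_T`. -/
noncomputable def OmegaC (S T : MIO A) : MIO (A ⊕ A) :=
  Omega (oOf S T) S Set.inter_subset_left

/-- Composability of the queue-extended MIOs, i.e. definedness of `S ⊗_as T`. -/
def AsyncComposable (S T : MIO A) : Prop := Composable (OmegaC S T) (OmegaC T S)

/-- Asynchronous composition `S ⊗_as T = Ω_{o_S}(S) ⊗_sy Ω_{o_T}(T)`. -/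
noncomputable def asyncComp (S T : MIO A) (h : AsyncComposable S T) : MIO (A ⊕ A) :=
  syncComp (OmegaC S T) (OmegaC T S) h

/-- Asynchronous modal compatibility `S ⇄_ac T`. -/
def AsyncCompat (S T : MIO A) : Prop :=
  Composable S T ∧ WeakCompat (OmegaC S T) (OmegaC T S)

end MIO

open MIO

namespace MIO
variable {A : Type}

lemma shared_omega (o : Set A) (S : MIO A) (ho : o ⊆ S.out) :
    shared (rename (tagged o) (tagged_injective o) S) (queueMIO o) = Sum.inr '' o := by
  classical
  ext b
  constructor
  · rintro ⟨hb1, hb2⟩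
    rcases (by simpa [queueMIO, act, Set.image, Set.mem_union] using hb2 :
        (∃ n ∈ o, Sum.inr n = b) ∨ (∃ n ∈ o, Sum.inl n = b)) with ⟨n, hn, hb⟩ | ⟨n, hn, hb⟩
    · exact ⟨n, hn, hb⟩
    · exfalso
      obtain ⟨a, _, ha⟩ : ∃ a, ((a ∈ S.inp ∨ a ∈ S.out) ∨ a ∈ S.intl) ∧ tagged o a = b := by
        simpa [rename, act, ← Set.image_union] using hb1
      rw [← hb] at ha
      by_cases hao : a ∈ o
      · simp [tagged, hao] at ha
      · simp [tagged, hao] at ha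
        exact hao (ha ▸ hn)
  · rintro ⟨n, hn, rfl⟩
    refine ⟨?_, ?_⟩
    · have : Sum.inr n ∈ (tagged o) '' S.out := ⟨n, ho hn, by simp [tagged, hn]⟩
      simp only [rename, act, Set.mem_union]
      exact Or.inl (Or.inr this)
    · simp only [queueMIO, act, Set.mem_union]
      exact Or.inl (Or.inl ⟨n, hn, rfl⟩)

lemma omega_inp (o : Set A) (S : MIO A) (ho : o ⊆ S.out) :
    (Omega o S ho).inp = Sum.inl '' S.inp := by
  classical
  have hs := shared_omega o S ho
  show ((tagged o '' S.inp ∪ Sum.inr '' o) \ _) = _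
  rw [hs]
  have h1 : tagged o '' S.inp = Sum.inl '' S.inp := by
    apply Set.image_congr
    intro a ha
    have : a ∉ o := fun hao => S.inp_out a ha (ho hao)
    simp [tagged, this]
  rw [h1, Set.union_diff_distrib, Set.diff_self, Set.union_empty]
  ext b
  constructor
  · rintro ⟨hb, _⟩; exact hb
  · rintro ⟨a, ha, rfl⟩
    exact ⟨⟨a, ha, rfl⟩, by rintro ⟨m, _, hm⟩; simp at hm⟩

lemma omega_out (o : Set A) (S : MIO A) (ho : o ⊆ S.out) :
    (Omega o S ho).out = Sum.inl '' S.out := by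
  classical
  have hs := shared_omega o S ho
  show ((tagged o '' S.out ∪ Sum.inl '' o) \ _) = _
  rw [hs]
  ext b
  simp only [Set.mem_diff, Set.mem_union, Set.mem_image]
  constructor
  · rintro ⟨(⟨a, ha, rfl⟩ | ⟨n, hn, rfl⟩), hns⟩
    · by_cases hao : a ∈ o
      · exact absurd ⟨a, hao, by simp [tagged, hao]⟩ hns
      · exact ⟨a, ha, by simp [tagged, hao]⟩
    · exact ⟨n, ho hn, rfl⟩
  · rintro ⟨a, ha, rfl⟩
    refine ⟨?_, by rintro ⟨n, _, h⟩; simp at h⟩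
    by_cases hao : a ∈ o
    · exact Or.inr ⟨a, hao, rfl⟩
    · exact Or.inl ⟨a, ha, by simp [tagged, hao]⟩

lemma omega_intl (o : Set A) (S : MIO A) (ho : o ⊆ S.out) :
    (Omega o S ho).intl = Sum.inl '' S.intl ∪ Sum.inr '' o := by
  classical
  have hs := shared_omega o S ho
  show (tagged o '' S.intl ∪ ∅ ∪ _) = _
  rw [hs, Set.union_empty]
  congr 1
  apply Set.image_congr
  intro a ha
  have : a ∉ o := fun hao => S.out_intl a (ho hao) ha
  simp [tagged, this]

lemma omega_may_iff (o : Set A) (S : MIO A) (ho : o ⊆ S.out) (p p' : S.State × List A)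
    (b : A ⊕ A) :
    (Omega o S ho).may p b p' ↔
      (∃ n ∈ o, b = Sum.inr n ∧ S.may p.1 n p'.1 ∧ p'.2 = n :: p.2) ∨
      (∃ a, a ∉ o ∧ a ∈ S.act ∧ b = Sum.inl a ∧ S.may p.1 a p'.1 ∧ p'.2 = p.2) ∨
      (∃ n ∈ o, b = Sum.inl n ∧ p'.1 = p.1 ∧ p.2 = p'.2 ++ [n]) := by
  classical
  have hs := shared_omega o S ho
  constructor
  · rintro (⟨hb, hm1, hm2⟩ | ⟨hb1, hb2, hm, heq⟩ | ⟨hb1, hb2, hm, heq⟩)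
    · rw [hs] at hb
      obtain ⟨n, hn, rfl⟩ := hb
      obtain ⟨a, hab, hma⟩ := hm1
      have ha : n = a := by
        by_cases hao : a ∈ o
        · simpa [tagged, hao] using hab
        · simp [tagged, hao] at hab
      subst ha
      rcases hm2 with ⟨m, _, hbm, hq⟩ | ⟨m, _, hbm, _⟩
      · have hmn : n = m := by simpa using hbm
        subst hmn
        exact Or.inl ⟨n, hn, rfl, hma, hq⟩
      · simp at hbm
    · rw [hs] at hb2
      obtain ⟨a, hab, hma⟩ := hm
      obtain ⟨c, hc, hcb⟩ : ∃ c ∈ S.act, tagged o c = b := by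
        have hb1' := hb1
        simp only [rename, act, Set.mem_union, Set.mem_image] at hb1'
        rcases hb1' with (⟨c, hc, hh⟩ | ⟨c, hc, hh⟩) | ⟨c, hc, hh⟩
        · exact ⟨c, Or.inl (Or.inl hc), hh⟩
        · exact ⟨c, Or.inl (Or.inr hc), hh⟩
        · exact ⟨c, Or.inr hc, hh⟩
      have hca : c = a := tagged_injective o (by rw [hcb, hab])
      subst hca
      by_cases hao : c ∈ o
      · exact absurd (hab ▸ ⟨c, hao, by simp [tagged, hao]⟩) hb2
      · exact Or.inr (Or.inl ⟨c, hao, hc, by simpa [tagged, hao] using hab, hma, heq⟩)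
    · rw [hs] at hb2
      rcases hm with ⟨n, hn, rfl, _⟩ | ⟨n, hn, rfl, hq⟩
      · exact absurd ⟨n, hn, rfl⟩ hb2
      · exact Or.inr (Or.inr ⟨n, hn, rfl, heq, hq⟩)
  · rintro (⟨n, hn, rfl, hm, hq⟩ | ⟨a, hao, ha, rfl, hm, hq⟩ | ⟨n, hn, rfl, h1, h2⟩)
    · refine Or.inl ⟨hs ▸ ⟨n, hn, rfl⟩, ⟨n, by simp [tagged, hn], hm⟩,
        Or.inl ⟨n, hn, rfl, hq⟩⟩
    · refine Or.inr (Or.inl ⟨?_, ?_, ⟨a, by simp [tagged, hao], hm⟩, hq⟩)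
      · have hact : (rename (tagged o) (tagged_injective o) S).act = tagged o '' S.act := by
          simp [rename, act, Set.image_union]
        rw [hact]
        exact ⟨a, ha, by simp [tagged, hao]⟩
      · rw [hs]; rintro ⟨m, _, hh⟩; simp at hh
    · refine Or.inr (Or.inr ⟨?_, ?_, Or.inr ⟨n, hn, rfl, h2⟩, h1⟩)
      · simp only [queueMIO, act, Set.mem_union]
        exact Or.inl (Or.inr ⟨n, hn, rfl⟩)
      · rw [hs]; rintro ⟨m, _, hh⟩; simp at hh

lemma omega_must_iff (o : Set A) (S : MIO A) (ho : o ⊆ S.out) (p p' : S.State × List A)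
    (b : A ⊕ A) :
    (Omega o S ho).must p b p' ↔
      (∃ n ∈ o, b = Sum.inr n ∧ S.must p.1 n p'.1 ∧ p'.2 = n :: p.2) ∨
      (∃ a, a ∉ o ∧ a ∈ S.act ∧ b = Sum.inl a ∧ S.must p.1 a p'.1 ∧ p'.2 = p.2) ∨
      (∃ n ∈ o, b = Sum.inl n ∧ p'.1 = p.1 ∧ p.2 = p'.2 ++ [n]) := by
  classical
  have hs := shared_omega o S ho
  constructor
  · rintro (⟨hb, hm1, hm2⟩ | ⟨hb1, hb2, hm, heq⟩ | ⟨hb1, hb2, hm, heq⟩)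
    · rw [hs] at hb
      obtain ⟨n, hn, rfl⟩ := hb
      obtain ⟨a, hab, hma⟩ := hm1
      have ha : n = a := by
        by_cases hao : a ∈ o
        · simpa [tagged, hao] using hab
        · simp [tagged, hao] at hab
      subst ha
      rcases hm2 with ⟨m, _, hbm, hq⟩ | ⟨m, _, hbm, _⟩
      · have hmn : n = m := by simpa using hbm
        subst hmn
        exact Or.inl ⟨n, hn, rfl, hma, hq⟩
      · simp at hbm
    · rw [hs] at hb2
      obtain ⟨a, hab, hma⟩ := hm
      obtain ⟨c, hc, hcb⟩ : ∃ c ∈ S.act, tagged o c = b := by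
        have hb1' := hb1
        simp only [rename, act, Set.mem_union, Set.mem_image] at hb1'
        rcases hb1' with (⟨c, hc, hh⟩ | ⟨c, hc, hh⟩) | ⟨c, hc, hh⟩
        · exact ⟨c, Or.inl (Or.inl hc), hh⟩
        · exact ⟨c, Or.inl (Or.inr hc), hh⟩
        · exact ⟨c, Or.inr hc, hh⟩
      have hca : c = a := tagged_injective o (by rw [hcb, hab])
      subst hca
      by_cases hao : c ∈ o
      · exact absurd (hab ▸ ⟨c, hao, by simp [tagged, hao]⟩) hb2
      · exact Or.inr (Or.inl ⟨c, hao, hc, by simpa [tagged, hao] using hab, hma, heq⟩)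
    · rw [hs] at hb2
      rcases hm with ⟨n, hn, rfl, _⟩ | ⟨n, hn, rfl, hq⟩
      · exact absurd ⟨n, hn, rfl⟩ hb2
      · exact Or.inr (Or.inr ⟨n, hn, rfl, heq, hq⟩)
  · rintro (⟨n, hn, rfl, hm, hq⟩ | ⟨a, hao, ha, rfl, hm, hq⟩ | ⟨n, hn, rfl, h1, h2⟩)
    · refine Or.inl ⟨hs ▸ ⟨n, hn, rfl⟩, ⟨n, by simp [tagged, hn], hm⟩,
        Or.inl ⟨n, hn, rfl, hq⟩⟩
    · refine Or.inr (Or.inl ⟨?_, ?_, ⟨a, by simp [tagged, hao], hm⟩, hq⟩)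
      · have hact : (rename (tagged o) (tagged_injective o) S).act = tagged o '' S.act := by
          simp [rename, act, Set.image_union]
        rw [hact]
        exact ⟨a, ha, by simp [tagged, hao]⟩
      · rw [hs]; rintro ⟨m, _, hh⟩; simp at hh
    · refine Or.inr (Or.inr ⟨?_, ?_, Or.inr ⟨n, hn, rfl, h2⟩, h1⟩)
      · simp only [queueMIO, act, Set.mem_union]
        exact Or.inl (Or.inr ⟨n, hn, rfl⟩)
      · rw [hs]; rintro ⟨m, _, hh⟩; simp at hh

end MIO
namespace MIO
variable {A : Type}

lemma omega_tau_must (o : Set A) (S : MIO A) (ho : o ⊆ S.out) {s s' : S.State} (q : List A)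
    (h : S.tauMust s s') : (Omega o S ho).tauMust (s, q) (s', q) := by
  obtain ⟨c, hc, hm⟩ := h
  have hco : c ∉ o := fun hco => S.out_intl c (ho hco) hc
  refine ⟨Sum.inl c, ?_, ?_⟩
  · rw [omega_intl]
    exact Or.inl ⟨c, hc, rfl⟩
  · erw [omega_must_iff]
    exact Or.inr (Or.inl ⟨c, hco, Or.inr hc, rfl, hm, rfl⟩)

lemma omega_tauStar_must (o : Set A) (S : MIO A) (ho : o ⊆ S.out) {s s' : S.State} (q : List A)
    (h : S.tauMustStar s s') : (Omega o S ho).tauMustStar (s, q) (s', q) := by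
  induction h with
  | refl => exact Relation.ReflTransGen.refl
  | tail _ h2 ih => exact ih.tail (omega_tau_must o S ho q h2)

lemma omega_tau_may (o : Set A) (S : MIO A) (ho : o ⊆ S.out) {s s' : S.State} (q : List A)
    (h : S.tauMay s s') : (Omega o S ho).tauMay (s, q) (s', q) := by
  obtain ⟨c, hc, hm⟩ := h
  have hco : c ∉ o := fun hco => S.out_intl c (ho hco) hc
  refine ⟨Sum.inl c, ?_, ?_⟩
  · rw [omega_intl]
    exact Or.inl ⟨c, hc, rfl⟩
  · erw [omega_may_iff]
    exact Or.inr (Or.inl ⟨c, hco, Or.inr hc, rfl, hm, rfl⟩)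

lemma omega_tauStar_may (o : Set A) (S : MIO A) (ho : o ⊆ S.out) {s s' : S.State} (q : List A)
    (h : S.tauMayStar s s') : (Omega o S ho).tauMayStar (s, q) (s', q) := by
  induction h with
  | refl => exact Relation.ReflTransGen.refl
  | tail _ h2 ih => exact ih.tail (omega_tau_may o S ho q h2)

/-- An enqueue step is internal in `Ω_o(S)` (must version). -/
lemma omega_enqueue_must (o : Set A) (S : MIO A) (ho : o ⊆ S.out) {s s' : S.State}
    (q : List A) {n : A} (hn : n ∈ o) (h : S.must s n s') :
    (Omega o S ho).tauMust (s, q) (s', n :: q) := by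
  refine ⟨Sum.inr n, ?_, ?_⟩
  · rw [omega_intl]; exact Or.inr ⟨n, hn, rfl⟩
  · erw [omega_must_iff]; exact Or.inl ⟨n, hn, rfl, h, rfl⟩

lemma omega_enqueue_may (o : Set A) (S : MIO A) (ho : o ⊆ S.out) {s s' : S.State}
    (q : List A) {n : A} (hn : n ∈ o) (h : S.may s n s') :
    (Omega o S ho).tauMay (s, q) (s', n :: q) := by
  refine ⟨Sum.inr n, ?_, ?_⟩
  · rw [omega_intl]; exact Or.inr ⟨n, hn, rfl⟩
  · erw [omega_may_iff]; exact Or.inl ⟨n, hn, rfl, h, rfl⟩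

end MIO
/-- Weak modal refinement is preserved by adding output queues. -/
theorem weakRefines_Omega (A : Type) (S S' : MIO A) (o : Set A)
    (hsig : SigEq S' S) (ho : o ⊆ S.out) (ho' : o ⊆ S'.out)
    (h : WeakRefines S' S) :
    WeakRefines (Omega o S' ho') (Omega o S ho) := by
  obtain ⟨_, R, hR0, hR⟩ := h
  refine ⟨⟨by rw [omega_inp, omega_inp, hsig.1], by rw [omega_out, omega_out, hsig.2.1],
      by rw [omega_intl, omega_intl, hsig.2.2]⟩,
    fun p q => R p.1 q.1 ∧ p.2 = q.2, ⟨hR0, rfl⟩, ?_⟩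
  rintro ⟨s, qs⟩ ⟨t, qt⟩ ⟨hRst, (rfl : qs = qt)⟩
  obtain ⟨h1, h2, h3, h4⟩ := hR s t hRst
  have hact' : ∀ a, a ∈ S.inp ∪ S.out → a ∈ S'.act := by
    intro a ha
    rcases ha with ha | ha
    · exact Or.inl (Or.inl (hsig.1 ▸ ha))
    · exact Or.inl (Or.inr (hsig.2.1 ▸ ha))
  have hactS : ∀ a, a ∈ S.inp ∪ S.out → a ∈ S.act := by
    intro a ha
    rcases ha with ha | ha
    · exact Or.inl (Or.inl ha)
    · exact Or.inl (Or.inr ha)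
  refine ⟨?_, ?_, ?_, ?_⟩
  · -- must, visible
    intro b hb p' hmu
    rw [omega_inp, omega_out] at hb
    obtain ⟨a, ha, rfl⟩ : ∃ a ∈ S.inp ∪ S.out, Sum.inl a = b := by
      rcases hb with ⟨a, ha, rfl⟩ | ⟨a, ha, rfl⟩
      · exact ⟨a, Or.inl ha, rfl⟩
      · exact ⟨a, Or.inr ha, rfl⟩
    erw [omega_must_iff] at hmu
    rcases hmu with ⟨n, _, heq, _, _⟩ | ⟨a', hao, _, heq, hmu, hq'⟩ | ⟨n, hn, heq, hp1, hp2⟩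
    · simp at heq
    · obtain rfl : a = a' := by simpa using heq
      obtain ⟨s1, s2, s'', hst1, hmu', hst2, hR'⟩ := h1 a ha p'.1 hmu
      refine ⟨(s1, qs), (s2, qs), (s'', qs), omega_tauStar_must o S' ho' qs hst1, ?_,
        omega_tauStar_must o S' ho' qs hst2, hR', hq'.symm⟩
      erw [omega_must_iff]
      exact Or.inr (Or.inl ⟨a, hao, hact' a ha, rfl, hmu', rfl⟩)
    · obtain rfl : a = n := by simpa using heq
      refine ⟨(s, qs), (s, p'.2), (s, p'.2), Relation.ReflTransGen.refl, ?_,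
        Relation.ReflTransGen.refl, by rw [hp1]; exact hRst, rfl⟩
      erw [omega_must_iff]
      exact Or.inr (Or.inr ⟨a, hn, rfl, rfl, hp2⟩)
  · -- must, internal
    intro b hb p' hmu
    rw [omega_intl] at hb
    erw [omega_must_iff] at hmu
    rcases hmu with ⟨n, hn, rfl, hmu, hq'⟩ | ⟨a, hao, _, rfl, hmu, hq'⟩ | ⟨n, hn, rfl, hp1, hp2⟩
    · obtain ⟨s1, s2, s'', hst1, hmu', hst2, hR'⟩ := h1 n (Or.inr (ho hn)) p'.1 hmu
      refine ⟨(s'', n :: qs), ?_, hR', hq'.symm⟩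
      exact ((omega_tauStar_must o S' ho' qs hst1).tail
        (omega_enqueue_must o S' ho' qs hn hmu')).trans
        (omega_tauStar_must o S' ho' (n :: qs) hst2)
    · have ha : a ∈ S.intl := by
        rcases hb with ⟨c, hc, hcb⟩ | ⟨c, _, hcb⟩
        · obtain rfl : c = a := by simpa using hcb
          exact hc
        · simp at hcb
      obtain ⟨s'', hst, hR'⟩ := h2 a ha p'.1 hmu
      exact ⟨(s'', qs), omega_tauStar_must o S' ho' qs hst, hR', hq'.symm⟩
    · exfalso
      rcases hb with ⟨c, hc, hcb⟩ | ⟨c, _, hcb⟩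
      · obtain rfl : c = n := by simpa using hcb
        exact S.out_intl c (ho hn) hc
      · simp at hcb
  · -- may, visible
    intro b hb p' hmy
    rw [omega_inp, omega_out] at hb
    obtain ⟨a, ha, rfl⟩ : ∃ a ∈ S'.inp ∪ S'.out, Sum.inl a = b := by
      rcases hb with ⟨a, ha, rfl⟩ | ⟨a, ha, rfl⟩
      · exact ⟨a, Or.inl ha, rfl⟩
      · exact ⟨a, Or.inr ha, rfl⟩
    erw [omega_may_iff] at hmy
    rcases hmy with ⟨n, _, heq, _, _⟩ | ⟨a', hao, _, heq, hmy, hq'⟩ | ⟨n, hn, heq, hp1, hp2⟩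
    · simp at heq
    · obtain rfl : a = a' := by simpa using heq
      obtain ⟨t1, t2, t'', hst1, hmy', hst2, hR'⟩ := h3 a ha p'.1 hmy
      have haS : a ∈ S.inp ∪ S.out := by
        rcases ha with ha | ha
        · exact Or.inl (hsig.1 ▸ ha)
        · exact Or.inr (hsig.2.1 ▸ ha)
      refine ⟨(t1, qs), (t2, qs), (t'', qs), omega_tauStar_may o S ho qs hst1, ?_,
        omega_tauStar_may o S ho qs hst2, hR', hq'⟩
      erw [omega_may_iff]
      exact Or.inr (Or.inl ⟨a, hao, hactS a haS, rfl, hmy', rfl⟩)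
    · obtain rfl : a = n := by simpa using heq
      refine ⟨(t, qs), (t, p'.2), (t, p'.2), Relation.ReflTransGen.refl, ?_,
        Relation.ReflTransGen.refl, by rw [hp1]; exact hRst, rfl⟩
      erw [omega_may_iff]
      exact Or.inr (Or.inr ⟨a, hn, rfl, rfl, hp2⟩)
  · -- may, internal
    intro b hb p' hmy
    rw [omega_intl] at hb
    erw [omega_may_iff] at hmy
    rcases hmy with ⟨n, hn, rfl, hmy, hq'⟩ | ⟨a, hao, _, rfl, hmy, hq'⟩ | ⟨n, hn, rfl, hp1, hp2⟩
    · obtain ⟨t1, t2, t'', hst1, hmy', hst2, hR'⟩ := h3 n (Or.inr (ho' hn)) p'.1 hmy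
      refine ⟨(t'', n :: qs), ?_, hR', hq'⟩
      exact ((omega_tauStar_may o S ho qs hst1).tail
        (omega_enqueue_may o S ho qs hn hmy')).trans
        (omega_tauStar_may o S ho (n :: qs) hst2)
    · have ha : a ∈ S'.intl := by
        rcases hb with ⟨c, hc, hcb⟩ | ⟨c, _, hcb⟩
        · obtain rfl : c = a := by simpa using hcb
          exact hc
        · simp at hcb
      obtain ⟨t'', hst, hR'⟩ := h4 a ha p'.1 hmy
      exact ⟨(t'', qs), omega_tauStar_may o S ho qs hst, hR', hq'⟩
    · exfalso
      rcases hb with ⟨c, hc, hcb⟩ | ⟨c, _, hcb⟩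
      · obtain rfl : c = n := by simpa using hcb
        exact S'.out_intl c (ho' hn) hc
      · simp at hcb
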